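/- arXiv:1710.06026 — 2 statements merged into one kernel-verified Lean document; each statement's English description precedes it below -/
import Mathlib

section
/- Consider maximizing Σ_l α_l x_l² over x ∈ ℝⁿ subject to Σ_l (x_l − c_l)² ≤ C, where C > 0, all α_l > 0, and all c_l ≠ 0. At any maximizer x*, for every l the relative change r_l := (x*_l − c_l)/c_l is nonnegative. (Equivalently, x*_l has the same sign as c_l and |x*_l| ≥ |c_l|.) -/
open Finset

/-- At any maximizer of `∑ l, α l * x l ^ 2` subject to `∑ l, (x l - c l)^2 ≤ C`
(with `C > 0`, `α l > 0`, `c l ≠ 0`), each relative change `(x l - c l) / c l` is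
nonnegative. -/
theorem stmt_6 {n : ℕ} (α c : Fin n → ℝ) (C : ℝ) (hC : 0 < C)
    (hα : ∀ l, 0 < α l) (hc : ∀ l, c l ≠ 0) (x : Fin n → ℝ)
    (hmem : ∑ l, (x l - c l) ^ 2 ≤ C)
    (hmax : ∀ y : Fin n → ℝ, ∑ l, (y l - c l) ^ 2 ≤ C →
      ∑ l, α l * (y l) ^ 2 ≤ ∑ l, α l * (x l) ^ 2) :
    ∀ l, 0 ≤ (x l - c l) / c l := by
  intro l
  by_contra h
  push_neg at h
  have hcl := hc l
  have hprod : c l * (x l - c l) < 0 := by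
    rcases div_neg_iff.mp h with ⟨h1, h2⟩ | ⟨h1, h2⟩ <;> nlinarith
  set y : Fin n → ℝ := Function.update x l (2 * c l - x l) with hy
  have hfeas : ∑ j, (y j - c j) ^ 2 ≤ C := by
    have hsum : ∑ j, (y j - c j) ^ 2 = ∑ j, (x j - c j) ^ 2 := by
      apply Finset.sum_congr rfl
      intro j _
      by_cases hj : j = l
      · subst hj
        simp [hy, Function.update_self]
        ring
      · simp [hy, Function.update_of_ne hj]
    linarith [hmem]
  have hobj := hmax y hfeas
  have hsum2 : ∑ j, α j * (y j) ^ 2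
      = ∑ j, α j * (x j) ^ 2 + α l * ((2 * c l - x l) ^ 2 - (x l) ^ 2) := by
    have : ∀ j ∈ Finset.univ, α j * (y j) ^ 2
        = α j * (x j) ^ 2 + (if j = l then α l * ((2 * c l - x l) ^ 2 - (x l) ^ 2) else 0) := by
      intro j _
      by_cases hj : j = l
      · subst hj
        simp [hy, Function.update_self]
        ring
      · simp [hy, Function.update_of_ne hj, hj]
    rw [Finset.sum_congr rfl this, Finset.sum_add_distrib, Finset.sum_ite_eq' Finset.univ l]
    simp
  have hpos : 0 < α l * ((2 * c l - x l) ^ 2 - (x l) ^ 2) := by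
    have := hα l
    nlinarith
  linarith [hobj, hsum2.symm.le]
end

section
/- Consider maximizing Σ_l α_l x_l² over x ∈ ℝⁿ subject to Σ_l (x_l − c_l)² ≤ C, where C > 0, all α_l > 0, and all c_l ≠ 0. At any maximizer x*, the relative changes r_l = (x*_l − c_l)/c_l are monotone in α: if α_j ≥ α_k then r_j ≥ r_k. -/
open Finset

/-- At any maximizer of `∑ l, α l * x l ^ 2` subject to `∑ l, (x l - c l)^2 ≤ C`
(with `C > 0`, `α l > 0`, `c l ≠ 0`), the relative changes `(x l - c l) / c l`
are monotone in `α`. -/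
theorem stmt_7 {n : ℕ} (α c : Fin n → ℝ) (C : ℝ) (hC : 0 < C)
    (hα : ∀ l, 0 < α l) (hc : ∀ l, c l ≠ 0) (x : Fin n → ℝ)
    (hmem : ∑ l, (x l - c l) ^ 2 ≤ C)
    (hmax : ∀ y : Fin n → ℝ, ∑ l, (y l - c l) ^ 2 ≤ C →
      ∑ l, α l * (y l) ^ 2 ≤ ∑ l, α l * (x l) ^ 2) :
    ∀ j k, α k ≤ α j → (x k - c k) / c k ≤ (x j - c j) / c j := by
  -- Step 1: at the maximizer, every coordinate satisfies c l * (x l - c l) ≥ 0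
  have key : ∀ l, 0 ≤ c l * (x l - c l) := by
    intro l
    by_contra hcon
    push_neg at hcon
    set y : Fin n → ℝ := Function.update x l (2 * c l - x l) with hy
    have hyc : ∑ i, (y i - c i) ^ 2 ≤ C := by
      have heq : ∀ i, (y i - c i) ^ 2 = (x i - c i) ^ 2 := by
        intro i
        rcases eq_or_ne i l with rfl | hi
        · simp only [hy, Function.update_self]; ring
        · simp [hy, Function.update_of_ne hi]
      calc ∑ i, (y i - c i) ^ 2 = ∑ i, (x i - c i) ^ 2 := by
            exact Finset.sum_congr rfl fun i _ => heq i
        _ ≤ C := hmem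
    have hle := hmax y hyc
    rw [← Finset.add_sum_erase _ (fun i => α i * y i ^ 2) (mem_univ l),
        ← Finset.add_sum_erase _ (fun i => α i * x i ^ 2) (mem_univ l)] at hle
    have hrest : ∑ i ∈ univ.erase l, α i * y i ^ 2 = ∑ i ∈ univ.erase l, α i * x i ^ 2 :=
      Finset.sum_congr rfl fun i hi => by
        simp [hy, Function.update_of_ne (Finset.mem_erase.mp hi).1]
    rw [hrest] at hle
    have h2 : α l * y l ^ 2 ≤ α l * x l ^ 2 := by linarith
    have hyl : y l = 2 * c l - x l := by simp [hy]
    rw [hyl] at h2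
    have h3 : (2 * c l - x l) ^ 2 ≤ (x l) ^ 2 := le_of_mul_le_mul_left h2 (hα l)
    nlinarith [h3, hcon]
  intro j k hjk
  rcases eq_or_ne j k with rfl | hne
  · exact le_refl _
  have hkj : k ≠ j := Ne.symm hne
  set sj := x j - c j with hsj
  set sk := x k - c k with hsk
  have split : ∀ f : Fin n → ℝ, ∑ i, f i = f j + f k + ∑ i ∈ (univ.erase j).erase k, f i := by
    intro f
    rw [← Finset.add_sum_erase _ f (mem_univ j),
        ← Finset.add_sum_erase _ f (Finset.mem_erase.mpr ⟨hkj, mem_univ k⟩)]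
    ring
  set g : ℝ → ℝ := fun t => α j * (c j + sj * Real.cos t - sk * Real.sin t) ^ 2
                   + α k * (c k + sj * Real.sin t + sk * Real.cos t) ^ 2 with hg
  have hg0 : g 0 = α j * x j ^ 2 + α k * x k ^ 2 := by
    simp only [hg, Real.cos_zero, Real.sin_zero]
    rw [hsj, hsk]; ring
  have hgle : ∀ t, g t ≤ g 0 := by
    intro t
    set y : Fin n → ℝ := Function.update
      (Function.update x j (c j + sj * Real.cos t - sk * Real.sin t)) k
      (c k + sj * Real.sin t + sk * Real.cos t) with hy
    have hyj : y j = c j + sj * Real.cos t - sk * Real.sin t := by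
      simp [hy, Function.update_of_ne hne]
    have hyk : y k = c k + sj * Real.sin t + sk * Real.cos t := by simp [hy]
    have hyo : ∀ i, i ≠ j → i ≠ k → y i = x i := by
      intro i h1 h2
      simp [hy, Function.update_of_ne h1, Function.update_of_ne h2]
    have htrig : (y j - c j) ^ 2 + (y k - c k) ^ 2 = sj ^ 2 + sk ^ 2 := by
      rw [hyj, hyk]
      have hs := Real.sin_sq_add_cos_sq t
      linear_combination (sj ^ 2 + sk ^ 2) * hs
    have hyc : ∑ i, (y i - c i) ^ 2 ≤ C := by
      rw [split (fun i => (y i - c i) ^ 2)]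
      rw [split (fun i => (x i - c i) ^ 2)] at hmem
      have hr : ∑ i ∈ (univ.erase j).erase k, (y i - c i) ^ 2
          = ∑ i ∈ (univ.erase j).erase k, (x i - c i) ^ 2 :=
        Finset.sum_congr rfl fun i hi => by
          have h2 := (Finset.mem_erase.mp hi).1
          have h1 := (Finset.mem_erase.mp (Finset.mem_erase.mp hi).2).1
          rw [hyo i h1 h2]
      simp only [hr]
      have e : sj ^ 2 + sk ^ 2 = (x j - c j) ^ 2 + (x k - c k) ^ 2 := by rw [hsj, hsk]
      linarith [htrig, hmem, e]
    have hle := hmax y hyc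
    rw [split (fun i => α i * y i ^ 2), split (fun i => α i * x i ^ 2)] at hle
    have hr : ∑ i ∈ (univ.erase j).erase k, α i * y i ^ 2
        = ∑ i ∈ (univ.erase j).erase k, α i * x i ^ 2 :=
      Finset.sum_congr rfl fun i hi => by
        have h2 := (Finset.mem_erase.mp hi).1
        have h1 := (Finset.mem_erase.mp (Finset.mem_erase.mp hi).2).1
        rw [hyo i h1 h2]
    rw [hr] at hle
    rw [hg0]
    simp only [hg]
    rw [← hyj, ← hyk]
    linarith
  -- derivative of g at 0
  have hu : HasDerivAt (fun t => c j + sj * Real.cos t - sk * Real.sin t) (-sk) 0 := by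
    have h1 := (Real.hasDerivAt_cos 0).const_mul sj
    have h2 := (Real.hasDerivAt_sin 0).const_mul sk
    exact ((h1.const_add (c j)).sub h2).congr_deriv (by simp)
  have hv : HasDerivAt (fun t => c k + sj * Real.sin t + sk * Real.cos t) sj 0 := by
    have h1 := (Real.hasDerivAt_sin 0).const_mul sj
    have h2 := (Real.hasDerivAt_cos 0).const_mul sk
    exact ((h1.const_add (c k)).add h2).congr_deriv (by simp)
  have hgd : HasDerivAt g (2 * α k * (c k + sk) * sj - 2 * α j * (c j + sj) * sk) 0 := by
    have h := ((hu.pow 2).const_mul (α j)).add ((hv.pow 2).const_mul (α k))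
    refine h.congr_deriv ?_
    simp
    ring
  have hlm : IsLocalMax g 0 := Filter.Eventually.of_forall hgle
  have h0 : deriv g 0 = 0 := hlm.deriv_eq_zero
  have hd := hgd.deriv
  rw [h0] at hd
  -- stationarity
  have stat : α j * (c j + sj) * sk = α k * (c k + sk) * sj := by linarith
  -- final algebra
  have hpj : 0 ≤ c j * sj := key j
  have hpk : 0 ≤ c k * sk := key k
  have hcj2 : (0:ℝ) < (c j) ^ 2 := lt_of_le_of_ne (sq_nonneg _) (Ne.symm (pow_ne_zero 2 (hc j)))
  have hck2 : (0:ℝ) < (c k) ^ 2 := lt_of_le_of_ne (sq_nonneg _) (Ne.symm (pow_ne_zero 2 (hc k)))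
  have e1 : sk / c k = (c k * sk) / (c k) ^ 2 := by
    rw [sq, mul_div_mul_left _ _ (hc k)]
  have e2 : sj / c j = (c j * sj) / (c j) ^ 2 := by
    rw [sq, mul_div_mul_left _ _ (hc j)]
  rw [e1, e2, div_le_div_iff₀ hck2 hcj2]
  have stat2 : α j * ((c j) ^ 2 + c j * sj) * (c k * sk)
      = α k * ((c k) ^ 2 + c k * sk) * (c j * sj) := by
    linear_combination (c j * c k) * stat
  nlinarith [stat2, mul_nonneg hpj hpk,
    mul_nonneg (mul_nonneg (sub_nonneg.mpr hjk) hck2.le) hpj,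
    mul_nonneg (mul_nonneg (sub_nonneg.mpr hjk) hpj) hpk,
    hα j, hα k, hcj2, hck2]
end
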